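/- Let G be a finite group with center Z, and let ρ: G → GL(V) be a finite-dimensional complex representation of dimension s with character χ. If χ(g) = 0 for all g ∉ Z and |G/Z| = s², then ρ is irreducible. -/

import Mathlib

open Polynomial Module LinearMap TensorProduct

noncomputable def Complex.abs : AbsoluteValue ℂ ℝ := NormedField.toAbsoluteValue ℂ

lemma Complex.abs_natCast (n : ℕ) : Complex.abs (n : ℂ) = n := by
  simp [Complex.abs, NormedField.toAbsoluteValue]

lemma abs_trace_le_of_pow_eq_one {n : Type*} [Fintype n] [DecidableEq n]
    (M : Matrix n n ℂ) {k : ℕ} (hk : 0 < k) (h : M ^ k = 1) :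
    Complex.abs M.trace ≤ Fintype.card n := by
  have hroot : ∀ μ ∈ M.charpoly.roots, Complex.abs μ = 1 := by
    intro μ hμ
    have hμr : M.charpoly.IsRoot μ := (Polynomial.mem_roots (M.charpoly_monic.ne_zero)).1 hμ
    have hspec : μ ∈ spectrum ℂ M := by
      rw [spectrum.mem_iff]
      intro hunit
      rw [Matrix.isUnit_iff_isUnit_det] at hunit
      have heval : M.charpoly.eval μ = ((algebraMap ℂ (Matrix n n ℂ)) μ - M).det := by
        have h2 : ((algebraMap ℂ (Matrix n n ℂ)) μ - M) = (Matrix.charmatrix M).map (evalRingHom μ) := by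
          ext i j
          by_cases hij : i = j
          · subst hij; simp [Matrix.charmatrix_apply_eq, Matrix.algebraMap_matrix_apply]
          · simp [Matrix.charmatrix_apply_ne _ _ _ hij, Matrix.algebraMap_matrix_apply, hij]
        rw [h2, Matrix.charpoly, ← Polynomial.coe_evalRingHom, RingHom.map_det,
          RingHom.mapMatrix_apply]
      rw [← heval, hμr] at hunit
      exact (by simpa using hunit : IsUnit (0 : ℂ)).ne_zero rfl
    have hpow : μ ^ k ∈ spectrum ℂ (M ^ k) := by
      have hsub := spectrum.subset_polynomial_aeval M (X ^ k : ℂ[X])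
      have hmem : μ ^ k ∈ (fun x => (X ^ k : ℂ[X]).eval x) '' spectrum ℂ M :=
        ⟨μ, hspec, by simp⟩
      simpa using hsub hmem
    rw [h] at hpow
    have h1 : μ ^ k = 1 := by
      rw [spectrum.mem_iff] at hpow
      by_contra hne
      apply hpow
      have h3 : (algebraMap ℂ (Matrix n n ℂ)) (μ ^ k) - 1 = (algebraMap ℂ (Matrix n n ℂ)) (μ ^ k - 1) := by
        simp [map_sub]
      rw [h3]
      exact (IsUnit.map _ (Ne.isUnit (sub_ne_zero.2 hne)))
    have h4 : Complex.abs μ ^ k = 1 := by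
      rw [← map_pow, h1, map_one]
    have h0 : (0:ℝ) ≤ Complex.abs μ := AbsoluteValue.nonneg _ _
    by_contra hne
    rcases lt_or_gt_of_ne hne with hlt | hgt
    · have := pow_lt_one₀ h0 hlt hk.ne'
      linarith
    · have := one_lt_pow₀ hgt hk.ne'
      linarith
  have hsplit : M.charpoly.roots.card = Fintype.card n := by
    rw [← M.charpoly_natDegree_eq_dim]
    exact (Polynomial.splits_iff_card_roots.1 (IsAlgClosed.splits _))
  rw [Matrix.trace_eq_sum_roots_charpoly]
  have habs : ∀ s : Multiset ℂ, Complex.abs s.sum ≤ (s.map Complex.abs).sum := by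
    intro s
    induction s using Multiset.induction with
    | empty => simp
    | cons a s ih =>
      rw [Multiset.sum_cons, Multiset.map_cons, Multiset.sum_cons]
      exact le_trans (AbsoluteValue.add_le _ _ _) (by linarith)
  calc Complex.abs M.charpoly.roots.sum ≤ (M.charpoly.roots.map Complex.abs).sum := habs _
    _ = ((M.charpoly.roots.map (fun _ => (1:ℝ))).sum) := by
        rw [Multiset.map_congr rfl hroot]
    _ = Fintype.card n := by
        rw [Multiset.map_const', Multiset.sum_replicate, hsplit]
        simp

lemma abs_trace_le_of_pow_eq_one' {V : Type*} [AddCommGroup V] [Module ℂ V]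
    [FiniteDimensional ℂ V] (f : V →ₗ[ℂ] V) {k : ℕ} (hk : 0 < k) (h : f ^ k = 1) :
    Complex.abs (LinearMap.trace ℂ V f) ≤ Module.finrank ℂ V := by
  classical
  let b := Module.finBasis ℂ V
  have htr : LinearMap.trace ℂ V f = (LinearMap.toMatrix b b f).trace :=
    LinearMap.trace_eq_matrix_trace ℂ b f
  have hM : (LinearMap.toMatrix b b f) ^ k = 1 := by
    have : LinearMap.toMatrix b b f = LinearMap.toMatrixAlgEquiv b f := rfl
    rw [this, ← map_pow, h, map_one]
  have := abs_trace_le_of_pow_eq_one (LinearMap.toMatrix b b f) hk hM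
  rw [htr]
  simpa using this

lemma trace_linHom_apply {G V : Type*} [Group G] [AddCommGroup V] [Module ℂ V]
    [FiniteDimensional ℂ V] (ρ : Representation ℂ G V) (g : G) :
    LinearMap.trace ℂ _ ((Representation.linHom ρ ρ) g) =
      LinearMap.trace ℂ V (ρ g⁻¹) * LinearMap.trace ℂ V (ρ g) := by
  let e : Module.Dual ℂ V ⊗[ℂ] V ≃ₗ[ℂ] (V →ₗ[ℂ] V) :=
    dualTensorHomEquivOfBasis (Module.finBasis ℂ V)
  have he : e.toLinearMap = dualTensorHom ℂ V V :=
    dualTensorHomEquivOfBasis_toLinearMap _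
  have hconj : (Representation.linHom ρ ρ) g =
      e.conj (TensorProduct.map (ρ.dual g) (ρ g)) := by
    rw [LinearEquiv.conj_apply]
    have hcomm := Representation.dualTensorHom_comm ρ ρ g
    rw [← he] at hcomm
    rw [hcomm, LinearMap.comp_assoc, LinearEquiv.comp_coe, LinearEquiv.symm_trans_self]
    rfl
  rw [hconj, LinearMap.trace_conj', trace_tensorProduct', Representation.dual_apply,
    trace_transpose']


/-- If the character of a finite-dimensional complex representation of a finite group
vanishes off the center and `|G/Z| = (dim V)²`, then the representation is irreducible. -/
theorem stmt_0 {G V : Type*} [Group G] [Fintype G]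
    [AddCommGroup V] [Module ℂ V] [FiniteDimensional ℂ V]
    (ρ : Representation ℂ G V)
    (hχ : ∀ g : G, g ∉ Subgroup.center G → LinearMap.trace ℂ V (ρ g) = 0)
    (hcard : Nat.card (G ⧸ Subgroup.center G) = (Module.finrank ℂ V) ^ 2) :
    ∀ U : Submodule ℂ V, (∀ g : G, ∀ v ∈ U, ρ g v ∈ U) → U = ⊥ ∨ U = ⊤ := by
  classical
  intro U hU
  have hGpos : 0 < Fintype.card G := Fintype.card_pos
  have hNne : ((Fintype.card G : ℂ)) ≠ 0 := by exact_mod_cast hGpos.ne'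
  haveI : Invertible (Fintype.card G : ℂ) := invertibleOfNonzero hNne
  have hnpos : 0 < Module.finrank ℂ V := by
    by_contra h0
    push_neg at h0
    have h2 : 0 < Nat.card (G ⧸ Subgroup.center G) := Nat.card_pos
    have h3 : Module.finrank ℂ V = 0 := Nat.le_zero.1 h0
    rw [h3] at hcard
    simp at hcard
  haveI : Nontrivial V := Module.nontrivial_of_finrank_pos hnpos
  set L : Representation ℂ G (V →ₗ[ℂ] V) := Representation.linHom ρ ρ with hL
  -- Step A : the dimension of the invariants of linHom ρ ρ
  have hA : ((Module.finrank ℂ L.invariants : ℂ)) =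
      ⅟(Fintype.card G : ℂ) • ∑ g : G,
        LinearMap.trace ℂ V (ρ g⁻¹) * LinearMap.trace ℂ V (ρ g) := by
    rw [← (Representation.isProj_averageMap L).trace]
    have havg : L.averageMap = ⅟(Fintype.card G : ℂ) • ∑ g : G, L g := by
      simp [Representation.averageMap, GroupAlgebra.average, _root_.map_sum]
    rw [havg, map_smul, map_sum]
    congr 1
    exact Finset.sum_congr rfl fun g _ => trace_linHom_apply ρ g
  -- Step B : bound on the character sum
  have hbound : ∀ g : G, Complex.abs (LinearMap.trace ℂ V (ρ g)) ≤ Module.finrank ℂ V := by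
    intro g
    apply abs_trace_le_of_pow_eq_one' _ hGpos
    rw [← map_pow, pow_card_eq_one, map_one]
  have hZG : Fintype.card G = Fintype.card (Subgroup.center G) * (Module.finrank ℂ V) ^ 2 := by
    have h1 := Subgroup.card_eq_card_quotient_mul_card_subgroup (Subgroup.center G)
    rw [hcard] at h1
    simp only [Nat.card_eq_fintype_card] at h1
    rw [h1]; ring
  have hsum : Complex.abs (∑ g : G,
      LinearMap.trace ℂ V (ρ g⁻¹) * LinearMap.trace ℂ V (ρ g)) ≤ Fintype.card G := by
    set t : G → ℂ := fun g => LinearMap.trace ℂ V (ρ g⁻¹) * LinearMap.trace ℂ V (ρ g) with ht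
    have hfilter : ∑ g ∈ Finset.univ.filter (· ∈ Subgroup.center G), t g = ∑ g : G, t g := by
      apply Finset.sum_filter_of_ne
      intro g _ hne
      by_contra hg
      exact hne (by simp [ht, hχ g hg])
    rw [← hfilter]
    calc Complex.abs (∑ g ∈ Finset.univ.filter (· ∈ Subgroup.center G), t g)
        ≤ ∑ g ∈ Finset.univ.filter (· ∈ Subgroup.center G), Complex.abs (t g) :=
          Complex.abs.sum_le _ _
      _ ≤ ∑ g ∈ Finset.univ.filter (· ∈ Subgroup.center G),
            ((Module.finrank ℂ V : ℝ) * (Module.finrank ℂ V : ℝ)) := by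
          apply Finset.sum_le_sum
          intro g _
          rw [ht, map_mul]
          exact mul_le_mul (hbound g⁻¹) (hbound g) (AbsoluteValue.nonneg _ _) (by positivity)
      _ = (Finset.univ.filter (· ∈ Subgroup.center G)).card *
            ((Module.finrank ℂ V : ℝ) * (Module.finrank ℂ V : ℝ)) := by
          rw [Finset.sum_const, nsmul_eq_mul]
      _ = Fintype.card G := by
          rw [← Fintype.card_subtype, hZG]
          push_cast
          ring
  -- Step C : the invariants have dimension at most 1
  have hd1 : Module.finrank ℂ L.invariants ≤ 1 := by
    have h2 := congrArg Complex.abs hA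
    rw [smul_eq_mul, map_mul, invOf_eq_inv, map_inv₀, Complex.abs_natCast,
      Complex.abs_natCast] at h2
    have hcpos : (0:ℝ) < Fintype.card G := by exact_mod_cast hGpos
    have h3 : ((Module.finrank ℂ L.invariants : ℝ)) ≤ 1 := by
      rw [h2]
      calc ((Fintype.card G : ℝ))⁻¹ * Complex.abs (∑ g : G,
            LinearMap.trace ℂ V (ρ g⁻¹) * LinearMap.trace ℂ V (ρ g))
          ≤ ((Fintype.card G : ℝ))⁻¹ * Fintype.card G :=
            mul_le_mul_of_nonneg_left hsum (by positivity)
        _ = 1 := inv_mul_cancel₀ hcpos.ne'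
    exact_mod_cast h3
  -- identity is invariant
  have hone : (1 : V →ₗ[ℂ] V) ∈ L.invariants := by
    rw [Representation.mem_invariants]
    intro g
    rw [hL, Representation.linHom_apply]
    ext v
    simp only [LinearMap.coe_comp, Function.comp_apply, Module.End.one_apply]
    rw [← Module.End.mul_apply, ← map_mul, mul_inv_cancel, map_one, Module.End.one_apply]
  by_cases hUbot : U = ⊥
  · exact Or.inl hUbot
  right
  obtain ⟨u, huU, hune⟩ := Submodule.exists_mem_ne_zero_of_ne_bot hUbot
  -- the averaged projection onto U
  obtain ⟨U', hcompl⟩ := Submodule.exists_isCompl U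
  set π0 : V →ₗ[ℂ] V := U.subtype ∘ₗ (U.projectionOnto U' hcompl) with hπ0
  have hπ0U : ∀ v : V, π0 v ∈ U := fun v => (U.projectionOnto U' hcompl v).2
  have hπ0id : ∀ u ∈ U, π0 u = u := by
    intro w hw
    rw [hπ0]
    simp only [LinearMap.coe_comp, Function.comp_apply, Submodule.coe_subtype]
    rw [show w = ((⟨w, hw⟩ : U) : V) from rfl, Submodule.projectionOnto_apply_left]
  set P : V →ₗ[ℂ] V := ⅟(Fintype.card G : ℂ) • ∑ g : G, ρ g * π0 * ρ g⁻¹ with hP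
  have hPU : ∀ v : V, P v ∈ U := by
    intro v
    rw [hP]
    simp only [LinearMap.smul_apply, LinearMap.sum_apply, Module.End.mul_apply]
    exact Submodule.smul_mem _ _ (Submodule.sum_mem _ fun g _ => hU g _ (hπ0U _))
  have hPid : ∀ w ∈ U, P w = w := by
    intro w hw
    have hterm : ∀ g : G, (ρ g * π0 * ρ g⁻¹) w = w := by
      intro g
      simp only [Module.End.mul_apply]
      rw [hπ0id _ (hU g⁻¹ w hw), ← Module.End.mul_apply, ← map_mul, mul_inv_cancel, map_one,
        Module.End.one_apply]
    rw [hP]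
    simp only [LinearMap.smul_apply, LinearMap.sum_apply, hterm]
    rw [Finset.sum_const, Finset.card_univ, ← Nat.cast_smul_eq_nsmul ℂ, smul_smul,
      invOf_mul_self, one_smul]
  have hPS : P ∈ L.invariants := by
    rw [Representation.mem_invariants]
    intro h
    have happ : L h P = ρ h * P * ρ h⁻¹ := by
      rw [hL, Representation.linHom_apply]; rfl
    rw [happ, hP]
    simp only [Finset.mul_sum, Finset.sum_mul, Algebra.mul_smul_comm, Algebra.smul_mul_assoc]
    congr 1
    refine Fintype.sum_equiv (Equiv.mulLeft h)
      (fun g => ρ h * (ρ g * π0 * ρ g⁻¹) * ρ h⁻¹) (fun g => ρ g * π0 * ρ g⁻¹) ?_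
    intro x
    simp only [Equiv.coe_mulLeft, map_mul, mul_inv_rev]
    noncomm_ring
  -- use 1-dimensionality
  set x : L.invariants := ⟨1, hone⟩ with hx
  have hxne : x ≠ 0 := by
    intro h0
    have h1 : (1 : V →ₗ[ℂ] V) = 0 := congrArg Subtype.val h0
    have := LinearMap.congr_fun h1 u
    simp only [Module.End.one_apply, LinearMap.zero_apply] at this
    exact hune this
  have hspan : Submodule.span ℂ {x} = (⊤ : Submodule ℂ L.invariants) := by
    apply Submodule.eq_top_of_finrank_eq
    rw [finrank_span_singleton hxne]
    have hge : 0 < Module.finrank ℂ L.invariants :=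
      Module.finrank_pos_iff.2 ⟨x, 0, hxne⟩
    omega
  have hmem : (⟨P, hPS⟩ : L.invariants) ∈ Submodule.span ℂ {x} := by
    rw [hspan]; trivial
  obtain ⟨c, hc⟩ := Submodule.mem_span_singleton.1 hmem
  have hc' : P = c • (1 : V →ₗ[ℂ] V) := by
    have := congrArg Subtype.val hc
    exact this.symm
  have hcu : c • u = u := by
    have h1 := hPid u huU
    rw [hc'] at h1
    simpa using h1
  have hc1 : c = 1 := by
    by_contra hcne
    have h2 : (c - 1) • u = 0 := by rw [sub_smul, hcu, one_smul, sub_self]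
    rcases smul_eq_zero.1 h2 with h3 | h3
    · exact hcne (by linear_combination h3)
    · exact hune h3
  rw [Submodule.eq_top_iff']
  intro v
  have : P v = v := by rw [hc', hc1]; simp
  rw [← this]
  exact hPU v
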